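/- Let 𝔤 be a nonabelian nilpotent Lie algebra such that for every triple (X₁,X₂,X₃) ∈ 𝔤³ the subspace spanned by X₁, X₂, X₃, [X₁,X₂], [X₁,X₃], [X₂,X₃] has dimension at most 4. Then 𝔤 is either two-step nilpotent or has a codimension one abelian ideal. -/

import Mathlib

open Submodule Module
open Submodule Module

set_option linter.unusedSectionVars false
set_option linter.unusedVariables false
set_option maxHeartbeats 1000000
namespace Stmt8

variable {L : Type*} [AddCommGroup L] [Module ℝ L]

/-- Key nilpotency workhorse: if `S ≤ f(S) ⊔ W` with `W` invariant and `f` nilpotent,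
then `S ≤ W`. -/
lemma flag_aux (f : Module.End ℝ L) (hf : IsNilpotent f) (W S : Submodule ℝ L)
    (hW : ∀ a ∈ W, f a ∈ W) (hS : S ≤ S.map f ⊔ W) : S ≤ W := by
  obtain ⟨N, hN⟩ := hf
  have key : ∀ k : ℕ, S ≤ S.map (f ^ k) ⊔ W := by
    intro k
    induction k with
    | zero =>
      rw [pow_zero, Module.End.one_eq_id, Submodule.map_id]
      exact le_sup_left
    | succ n ih =>
      refine hS.trans (sup_le ?_ le_sup_right)
      have h1 : S.map f ≤ (S.map (f ^ n) ⊔ W).map f := Submodule.map_mono ih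
      refine h1.trans ?_
      rw [Submodule.map_sup]
      apply sup_le_sup
      · rw [pow_succ', Module.End.mul_eq_comp, Submodule.map_comp]
      · intro u hu
        obtain ⟨a, ha, rfl⟩ := Submodule.mem_map.mp hu
        exact hW a ha
  have h := key N
  rwa [hN, Submodule.map_zero, bot_sup_eq] at h

lemma mem_map_sup {f : Module.End ℝ L} {S W : Submodule ℝ L} {u : L} (s : L) (hs : s ∈ S)
    (t : L) (ht : t ∈ W) (heq : u = f s + t) : u ∈ S.map f ⊔ W :=
  Submodule.mem_sup.mpr ⟨f s, Submodule.mem_map_of_mem hs, t, ht, heq.symm⟩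

/-- Eigenvector-mod-invariant-subspace argument. -/
lemma flag1 (f : Module.End ℝ L) (hf : IsNilpotent f) (W : Submodule ℝ L)
    (hW : ∀ a ∈ W, f a ∈ W) {u : L} {μ : ℝ} (hμ : μ ≠ 0)
    (h : f u - μ • u ∈ W) : u ∈ W := by
  have key : span ℝ ({u} : Set L) ≤ W := by
    refine flag_aux f hf W _ hW ?_
    rw [span_le, Set.singleton_subset_iff]
    refine mem_map_sup (μ⁻¹ • u) (smul_mem _ _ (mem_span_singleton_self u))
      ((-μ⁻¹) • (f u - μ • u)) (smul_mem _ _ h) ?_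
    rw [map_smul, neg_smul, smul_sub, smul_smul, inv_mul_cancel₀ hμ, one_smul]
    abel
  exact key (mem_span_singleton_self u)

lemma span_stable {f : Module.End ℝ L} {s : Set L} (h : ∀ u ∈ s, f u ∈ span ℝ s) :
    ∀ a ∈ span ℝ s, f a ∈ span ℝ s := fun a ha =>
  (span_le.mpr fun u hu => Submodule.mem_comap.mpr (h u hu) :
    span ℝ s ≤ Submodule.comap f (span ℝ s)) ha

lemma combo2_mem (a b : L) (α β : ℝ) : α • a + β • b ∈ span ℝ ({a, b} : Set L) := by
  exact add_mem (smul_mem _ _ (subset_span (by simp))) (smul_mem _ _ (subset_span (by simp)))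

lemma combo3_mem (a b c : L) (α β γ : ℝ) :
    α • a + β • b + γ • c ∈ span ℝ ({a, b, c} : Set L) := by
  refine add_mem (add_mem ?_ ?_) ?_ <;> exact smul_mem _ _ (subset_span (by simp))

lemma combo4_mem (a b c d : L) (α β γ δ : ℝ) :
    α • a + β • b + γ • c + δ • d ∈ span ℝ ({a, b, c, d} : Set L) := by
  refine add_mem (add_mem (add_mem ?_ ?_) ?_) ?_ <;> exact smul_mem _ _ (subset_span (by simp))

lemma repr2 {a b u : L} (h : u ∈ span ℝ ({a, b} : Set L)) : ∃ α β : ℝ, u = α • a + β • b := by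
  rw [show ({a, b} : Set L) = insert a {b} from rfl, mem_span_insert] at h
  obtain ⟨α, u1, h1, rfl⟩ := h
  rw [mem_span_singleton] at h1
  obtain ⟨β, rfl⟩ := h1
  exact ⟨α, β, rfl⟩

lemma repr3 {a b c u : L} (h : u ∈ span ℝ ({a, b, c} : Set L)) :
    ∃ α β γ : ℝ, u = α • a + β • b + γ • c := by
  rw [show ({a, b, c} : Set L) = insert a {b, c} from rfl, mem_span_insert] at h
  obtain ⟨α, u1, h1, rfl⟩ := h
  obtain ⟨β, γ, rfl⟩ := repr2 h1
  exact ⟨α, β, γ, by abel⟩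

lemma repr4 {a b c d u : L} (h : u ∈ span ℝ ({a, b, c, d} : Set L)) :
    ∃ α β γ δ : ℝ, u = α • a + β • b + γ • c + δ • d := by
  rw [show ({a, b, c, d} : Set L) = insert a {b, c, d} from rfl, mem_span_insert] at h
  obtain ⟨α, u1, h1, rfl⟩ := h
  obtain ⟨β, γ, δ, rfl⟩ := repr3 h1
  exact ⟨α, β, γ, δ, by abel⟩

lemma peel {s : Set L} {e : L} (he : e ∉ span ℝ s) {u : L} {ε : ℝ}
    (hu : u ∈ span ℝ s) (h : u + ε • e = 0) : ε = 0 := by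
  by_contra hne
  apply he
  have h' : ε • e = -u := eq_neg_of_add_eq_zero_right h
  have : e = (-ε⁻¹) • u := by
    calc e = ε⁻¹ • (ε • e) := by rw [smul_smul, inv_mul_cancel₀ hne, one_smul]
    _ = ε⁻¹ • (-u) := by rw [h']
    _ = (-ε⁻¹) • u := by rw [smul_neg, neg_smul]
  rw [this]
  exact smul_mem _ _ hu

lemma chain5_coeff {a b c d e : L} (h1 : a ≠ 0) (h2 : b ∉ span ℝ ({a} : Set L))
    (h3 : c ∉ span ℝ ({a, b} : Set L)) (h4 : d ∉ span ℝ ({a, b, c} : Set L))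
    (h5 : e ∉ span ℝ ({a, b, c, d} : Set L))
    {α β γ δ ε : ℝ} (h : α • a + β • b + γ • c + δ • d + ε • e = 0) :
    α = 0 ∧ β = 0 ∧ γ = 0 ∧ δ = 0 ∧ ε = 0 := by
  have hε : ε = 0 := peel h5 (combo4_mem a b c d α β γ δ) h
  rw [hε, zero_smul, add_zero] at h
  have hδ : δ = 0 := peel h4 (combo3_mem a b c α β γ) h
  rw [hδ, zero_smul, add_zero] at h
  have hγ : γ = 0 := peel h3 (combo2_mem a b α β) h
  rw [hγ, zero_smul, add_zero] at h
  have hβ : β = 0 := peel h2 (smul_mem _ _ (mem_span_singleton_self a)) h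
  rw [hβ, zero_smul, add_zero] at h
  exact ⟨by rcases smul_eq_zero.mp h with h' | h'; exact h'; exact absurd h' h1, hβ, hγ, hδ, hε⟩

lemma mem_span_singleton_swap {a b : L} (ha : a ≠ 0) (h : a ∈ span ℝ ({b} : Set L)) :
    b ∈ span ℝ ({a} : Set L) := by
  obtain ⟨lam, hl⟩ := mem_span_singleton.mp h
  have hlam : lam ≠ 0 := by rintro rfl; rw [zero_smul] at hl; exact ha hl.symm
  rw [mem_span_singleton]
  exact ⟨lam⁻¹, by rw [← hl, smul_smul, inv_mul_cancel₀ hlam, one_smul]⟩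



variable {L : Type*} [AddCommGroup L] [Module ℝ L]

lemma range_rev1 (a : L) : Set.range ![a] = ({a} : Set L) := by
  ext u; simp [Matrix.range_cons, Matrix.range_empty]

lemma range_rev2 (a b : L) : Set.range ![b, a] = ({a, b} : Set L) := by
  ext u; simp [Matrix.range_cons, Matrix.range_empty]

lemma range_rev3 (a b c : L) : Set.range ![c, b, a] = ({a, b, c} : Set L) := by
  ext u; simp [Matrix.range_cons, Matrix.range_empty]

lemma range_rev4 (a b c d : L) : Set.range ![d, c, b, a] = ({a, b, c, d} : Set L) := by
  ext u; simp [Matrix.range_cons, Matrix.range_empty]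

lemma range_rev5 (a b c d e : L) :
    Set.range ![e, d, c, b, a] = ({a, b, c, d, e} : Set L) := by
  ext u; simp [Matrix.range_cons, Matrix.range_empty]

lemma li_one {a : L} (h : a ≠ 0) : LinearIndependent ℝ ![a] := by
  apply linearIndependent_unique_iff.mpr
  simpa using h

lemma li_cons {n : ℕ} {v : Fin n → L} {a : L} (hv : LinearIndependent ℝ v)
    (ha : a ∉ span ℝ (Set.range v)) : LinearIndependent ℝ (Matrix.vecCons a v) :=
  linearIndependent_fin_cons.mpr ⟨hv, ha⟩

lemma li_chain3 {a b c : L} (h1 : a ≠ 0) (h2 : b ∉ span ℝ ({a} : Set L))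
    (h3 : c ∉ span ℝ ({a, b} : Set L)) : LinearIndependent ℝ ![c, b, a] :=
  li_cons (li_cons (li_one h1) (by rwa [range_rev1])) (by rwa [range_rev2])

lemma li_chain4 {a b c d : L} (h1 : a ≠ 0) (h2 : b ∉ span ℝ ({a} : Set L))
    (h3 : c ∉ span ℝ ({a, b} : Set L)) (h4 : d ∉ span ℝ ({a, b, c} : Set L)) :
    LinearIndependent ℝ ![d, c, b, a] :=
  li_cons (li_chain3 h1 h2 h3) (by rwa [range_rev3])

lemma li_chain5 {a b c d e : L} (h1 : a ≠ 0) (h2 : b ∉ span ℝ ({a} : Set L))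
    (h3 : c ∉ span ℝ ({a, b} : Set L)) (h4 : d ∉ span ℝ ({a, b, c} : Set L))
    (h5 : e ∉ span ℝ ({a, b, c, d} : Set L)) :
    LinearIndependent ℝ ![e, d, c, b, a] :=
  li_cons (li_chain4 h1 h2 h3 h4) (by rwa [range_rev4])

lemma frank3 {a b c : L} (h1 : a ≠ 0) (h2 : b ∉ span ℝ ({a} : Set L))
    (h3 : c ∉ span ℝ ({a, b} : Set L)) :
    finrank ℝ (span ℝ ({a, b, c} : Set L)) = 3 := by
  have h := finrank_span_eq_card (li_chain3 h1 h2 h3)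
  rw [range_rev3] at h
  simpa using h

lemma frank4 {a b c d : L} (h1 : a ≠ 0) (h2 : b ∉ span ℝ ({a} : Set L))
    (h3 : c ∉ span ℝ ({a, b} : Set L)) (h4 : d ∉ span ℝ ({a, b, c} : Set L)) :
    finrank ℝ (span ℝ ({a, b, c, d} : Set L)) = 4 := by
  have h := finrank_span_eq_card (li_chain4 h1 h2 h3 h4)
  rw [range_rev4] at h
  simpa using h

lemma frank5 {a b c d e : L} (h1 : a ≠ 0) (h2 : b ∉ span ℝ ({a} : Set L))
    (h3 : c ∉ span ℝ ({a, b} : Set L)) (h4 : d ∉ span ℝ ({a, b, c} : Set L))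
    (h5 : e ∉ span ℝ ({a, b, c, d} : Set L)) :
    finrank ℝ (span ℝ ({a, b, c, d, e} : Set L)) = 5 := by
  have h := finrank_span_eq_card (li_chain5 h1 h2 h3 h4 h5)
  rw [range_rev5] at h
  simpa using h

lemma force4 [FiniteDimensional ℝ L] {a b c d : L} (h1 : a ≠ 0)
    (h2 : b ∉ span ℝ ({a} : Set L)) (h3 : c ∉ span ℝ ({a, b} : Set L))
    (h4 : d ∉ span ℝ ({a, b, c} : Set L)) {s : Set L}
    (hsub : span ℝ ({a, b, c, d} : Set L) ≤ span ℝ s)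
    (hle : finrank ℝ (span ℝ s) ≤ 4) : span ℝ s = span ℝ ({a, b, c, d} : Set L) :=
  (Submodule.eq_of_le_of_finrank_le hsub (by rw [frank4 h1 h2 h3 h4]; exact hle)).symm

lemma absurd5 [FiniteDimensional ℝ L] {a b c d e : L} (h1 : a ≠ 0)
    (h2 : b ∉ span ℝ ({a} : Set L)) (h3 : c ∉ span ℝ ({a, b} : Set L))
    (h4 : d ∉ span ℝ ({a, b, c} : Set L)) (h5 : e ∉ span ℝ ({a, b, c, d} : Set L))
    {s : Set L} (hsub : span ℝ ({a, b, c, d, e} : Set L) ≤ span ℝ s)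
    (hle : finrank ℝ (span ℝ s) ≤ 4) : False := by
  have h := Submodule.finrank_mono hsub
  rw [frank5 h1 h2 h3 h4 h5] at h
  omega

section LiePart

variable {L : Type*} [LieRing L] [LieAlgebra ℝ L] [FiniteDimensional ℝ L]
  [LieRing.IsNilpotent L]

lemma tE_nil (g : L) : IsNilpotent (LieModule.toEnd ℝ L L g) :=
  LieModule.isNilpotent_toEnd_of_isNilpotent ℝ L L g

lemma tE_apply (g u : L) : LieModule.toEnd ℝ L L g u = ⁅g, u⁆ := rfl

lemma bot_stable (f : Module.End ℝ L) : ∀ a ∈ (⊥ : Submodule ℝ L), f a ∈ (⊥ : Submodule ℝ L) := by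
  intro a ha
  rw [Submodule.mem_bot] at ha ⊢
  rw [ha, map_zero]

/-- From `⁅⁅x,y⁆,y⁆ ≠ 0` we get that `x, y, ⁅x,y⁆, ⁅⁅x,y⁆,y⁆` form an independence chain. -/
lemma chain_of {x y z w : L} (hzdef : ⁅x, y⁆ = z) (hwdef : ⁅z, y⁆ = w) (hw : w ≠ 0) :
    x ≠ 0 ∧ y ∉ span ℝ ({x} : Set L) ∧ z ∉ span ℝ ({x, y} : Set L) ∧
      w ∉ span ℝ ({x, y, z} : Set L) := by
  have h1 : x ≠ 0 := by
    rintro rfl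
    rw [zero_lie] at hzdef
    rw [← hzdef, zero_lie] at hwdef
    exact hw hwdef.symm
  have h2 : y ∉ span ℝ ({x} : Set L) := by
    intro hy
    obtain ⟨lam, hl⟩ := Submodule.mem_span_singleton.mp hy
    rw [← hl, lie_smul, lie_self, smul_zero] at hzdef
    rw [← hzdef, zero_lie] at hwdef
    exact hw hwdef.symm
  have h3 : z ∉ span ℝ ({x, y} : Set L) := by
    intro hmem
    obtain ⟨α, β, hab⟩ := repr2 hmem
    have hzy : ⁅z, y⁆ = α • z := by
      conv_lhs => rw [hab]
      rw [add_lie, smul_lie, smul_lie, hzdef, lie_self, smul_zero, add_zero]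
    by_cases hα : α = 0
    · rw [hα, zero_smul] at hzy
      exact hw (hwdef.symm.trans hzy)
    · have hmem := flag1 (LieModule.toEnd ℝ L L y) (tE_nil y) ⊥ (bot_stable _)
        (μ := -α) (neg_ne_zero.mpr hα) (u := z)
        (by rw [Submodule.mem_bot, tE_apply, ← lie_skew, hzy, neg_smul, sub_neg_eq_add,
          neg_add_cancel])
      rw [Submodule.mem_bot] at hmem
      rw [hmem, zero_lie] at hwdef
      exact hw hwdef.symm
  refine ⟨h1, h2, h3, ?_⟩
  intro hmem
  have hyx : ⁅y, x⁆ = -z := by rw [← hzdef]; rw [lie_skew]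
  have hyz : ⁅y, z⁆ = -w := by rw [← hwdef]; rw [lie_skew]
  obtain ⟨a, b, c, habc⟩ := repr3 hmem
  by_cases ha : a = 0
  · by_cases hc : c = 0
    · have hb : b ≠ 0 := by
        rintro rfl
        rw [ha, hc, zero_smul, zero_smul, zero_smul, add_zero, zero_add] at habc
        exact hw habc
      have hy0 := flag1 (LieModule.toEnd ℝ L L z) (tE_nil z) ⊥ (bot_stable _)
        (μ := b) hb (u := y)
        (by rw [Submodule.mem_bot, tE_apply, hwdef, habc, ha, hc]; simp)
      rw [Submodule.mem_bot] at hy0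
      rw [hy0, lie_zero] at hwdef
      exact hw hwdef.symm
    · have hz' := flag1 (LieModule.toEnd ℝ L L y) (tE_nil y) (span ℝ ({y} : Set L))
        (span_stable (by
          rintro u hu
          rw [Set.mem_singleton_iff] at hu
          rw [hu, tE_apply, lie_self]
          exact zero_mem _))
        (μ := -c) (neg_ne_zero.mpr hc) (u := z)
        (by
          rw [tE_apply, hyz, habc, ha]
          have h9 : -((0:ℝ) • x + b • y + c • z) - (-c) • z = (-b) • y := by
            match_scalars <;> ring
          rw [h9]
          exact smul_mem _ _ (mem_span_singleton_self y))
      exact h3 (span_mono (by simp) hz' : z ∈ span ℝ ({x, y} : Set L))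
  · have hstab : ∀ m ∈ span ℝ ({y} : Set L),
        (LieModule.toEnd ℝ L L y) m ∈ span ℝ ({y} : Set L) := span_stable (by
      rintro u hu
      rw [Set.mem_singleton_iff] at hu
      rw [hu, tE_apply, lie_self]
      exact zero_mem _)
    have hS : span ℝ ({x, z} : Set L) ≤
        (span ℝ ({x, z} : Set L)).map (LieModule.toEnd ℝ L L y) ⊔ span ℝ ({y} : Set L) := by
      rw [span_le, Set.insert_subset_iff, Set.singleton_subset_iff]
      constructor
      · refine mem_map_sup ((-a⁻¹) • z + (a⁻¹ * c) • x)
          (add_mem (smul_mem _ _ (subset_span (by simp))) (smul_mem _ _ (subset_span (by simp))))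
          ((-(a⁻¹ * b)) • y) (smul_mem _ _ (mem_span_singleton_self y)) ?_
        simp only [map_add, map_smul, tE_apply]
        rw [hyz, hyx, habc]
        match_scalars <;> field_simp <;> ring
      · refine mem_map_sup (-x) (neg_mem (subset_span (by simp))) 0 (zero_mem _) ?_
        rw [map_neg, tE_apply, hyx]
        simp
    have hxz : x ∈ span ℝ ({x, z} : Set L) := subset_span (by simp)
    have hxmem : x ∈ span ℝ ({y} : Set L) := flag_aux _ (tE_nil y) _ _ hstab hS hxz
    exact h2 (mem_span_singleton_swap h1 hxmem)

end LiePart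
end Stmt8

open Submodule Module Stmt8 in
theorem stmt_8 (L : Type*) [LieRing L] [LieAlgebra ℝ L] [FiniteDimensional ℝ L]
    [LieRing.IsNilpotent L]
    (hna : ∃ x y : L, ⁅x, y⁆ ≠ 0)
    (hdim : ∀ X₁ X₂ X₃ : L,
      Module.finrank ℝ (Submodule.span ℝ
        ({X₁, X₂, X₃, ⁅X₁, X₂⁆, ⁅X₁, X₃⁆, ⁅X₂, X₃⁆} : Set L)) ≤ 4) :
    (∀ X Y Z : L, ⁅X, ⁅Y, Z⁆⁆ = 0) ∨
    (∃ 𝔞 : LieIdeal ℝ L, (∀ x ∈ 𝔞, ∀ y ∈ 𝔞, ⁅x, y⁆ = 0) ∧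
      Module.finrank ℝ 𝔞 + 1 = Module.finrank ℝ L) := by
  have skew : ∀ p q : L, ⁅p, q⁆ = -⁅q, p⁆ := fun p q => (lie_skew p q).symm
  by_cases h2 : ∀ a b : L, ⁅⁅a, b⁆, b⁆ = 0
  · left
    have pol : ∀ a b c : L, ⁅⁅a, b⁆, c⁆ = -⁅⁅a, c⁆, b⁆ := by
      intro a b c
      have h0 := h2 a (b + c)
      simp only [lie_add, add_lie] at h0
      rw [h2 a b, h2 a c] at h0
      simp only [zero_add, add_zero] at h0
      exact eq_neg_of_add_eq_zero_right h0
    have cyc : ∀ a b c : L, ⁅⁅b, c⁆, a⁆ = ⁅⁅a, b⁆, c⁆ := by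
      intro a b c
      rw [pol b c a, skew b a, neg_lie, neg_neg]
    have T0 : ∀ a b c : L, ⁅⁅a, b⁆, c⁆ = 0 := by
      intro a b c
      have j := lie_lie a b c
      have e1 : ⁅a, ⁅b, c⁆⁆ = -⁅⁅a, b⁆, c⁆ := by rw [skew a ⁅b, c⁆, cyc a b c]
      have e2 : ⁅b, ⁅a, c⁆⁆ = ⁅⁅a, b⁆, c⁆ := by rw [skew b ⁅a, c⁆, pol a c b, neg_neg]
      rw [e1, e2] at j
      have h3 : (3 : ℝ) • ⁅⁅a, b⁆, c⁆ = 0 := by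
        rw [show (3 : ℝ) = 1 + 1 + 1 by norm_num, add_smul, add_smul, one_smul]
        nth_rewrite 1 [j]
        abel
      rcases smul_eq_zero.mp h3 with h' | h'
      · norm_num at h'
      · exact h'
    intro X Y Z
    rw [skew X ⁅Y, Z⁆, T0 Y Z X, neg_zero]
  · right
    push_neg at h2
    obtain ⟨x0, y, hw0⟩ := h2
    have hNil : ∀ g : L, IsNilpotent (LieModule.toEnd ℝ L L g) := tE_nil
    obtain ⟨z, hzdef⟩ : ∃ z, ⁅x0, y⁆ = z := ⟨_, rfl⟩
    obtain ⟨w, hwdef⟩ : ∃ w, ⁅z, y⁆ = w := ⟨_, rfl⟩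
    have hw : w ≠ 0 := by rw [← hwdef, ← hzdef]; exact hw0
    obtain ⟨c1, c2, c3, c4⟩ := chain_of hzdef hwdef hw
    have hyne : y ≠ 0 := fun h => c2 (h ▸ zero_mem _)
    have hzne : z ≠ 0 := fun h => c3 (h ▸ zero_mem _)
    have hyx : ⁅y, x0⁆ = -z := by rw [← hzdef]; rw [lie_skew]
    have hyz : ⁅y, z⁆ = -w := by rw [← hwdef]; rw [lie_skew]
    have hstaby : ∀ m ∈ span ℝ ({y} : Set L),
        (LieModule.toEnd ℝ L L y) m ∈ span ℝ ({y} : Set L) := span_stable (by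
      rintro u hu
      rw [Set.mem_singleton_iff] at hu
      rw [hu, tE_apply, lie_self]
      exact zero_mem _)
    -- Step F1 : ⁅y, w⁆ = 0
    have hywV : ⁅y, w⁆ ∈ span ℝ ({x0, y, z, w} : Set L) := by
      have hforce := force4 c1 c2 c3 c4 (s := {x0, y, w, ⁅x0, y⁆, ⁅x0, w⁆, ⁅y, w⁆})
        (by
          rw [span_le, Set.insert_subset_iff, Set.insert_subset_iff, Set.insert_subset_iff,
            Set.singleton_subset_iff]
          refine ⟨subset_span (by simp), subset_span (by simp), ?_, subset_span (by simp)⟩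
          rw [← hzdef]
          exact subset_span (by simp)) (hdim x0 y w)
      rw [← hforce]
      exact subset_span (by simp)
    have hyw : ⁅y, w⁆ = 0 := by
      obtain ⟨a, b, c, d, hywd⟩ := repr4 hywV
      have hA : a = 0 := by
        by_contra hA
        have hS : span ℝ ({x0, z, w} : Set L) ≤
            (span ℝ ({x0, z, w} : Set L)).map (LieModule.toEnd ℝ L L y) ⊔
              span ℝ ({y} : Set L) := by
          rw [span_le, Set.insert_subset_iff, Set.insert_subset_iff, Set.singleton_subset_iff]
          refine ⟨?_, ?_, ?_⟩
          · refine mem_map_sup (a⁻¹ • w + (a⁻¹ * c) • x0 + (a⁻¹ * d) • z)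
              (add_mem (add_mem (smul_mem _ _ (subset_span (by simp)))
                (smul_mem _ _ (subset_span (by simp)))) (smul_mem _ _ (subset_span (by simp))))
              ((-(a⁻¹ * b)) • y) (smul_mem _ _ (mem_span_singleton_self y)) ?_
            simp only [map_add, map_smul, tE_apply]
            rw [hyx, hyz, hywd]
            match_scalars <;> field_simp <;> ring
          · refine mem_map_sup (-x0) (neg_mem (subset_span (by simp))) 0 (zero_mem _) ?_
            rw [map_neg, tE_apply, hyx]
            simp
          · refine mem_map_sup (-z) (neg_mem (subset_span (by simp))) 0 (zero_mem _) ?_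
            rw [map_neg, tE_apply, hyz]
            simp
        have hx0mem : x0 ∈ span ℝ ({y} : Set L) :=
          flag_aux _ (hNil y) _ _ hstaby hS (subset_span (by simp))
        exact c2 (mem_span_singleton_swap c1 hx0mem)
      rw [hA, zero_smul, zero_add] at hywd
      have hC : c = 0 := by
        by_contra hC
        have hS : span ℝ ({z, w} : Set L) ≤
            (span ℝ ({z, w} : Set L)).map (LieModule.toEnd ℝ L L y) ⊔
              span ℝ ({y} : Set L) := by
          rw [span_le, Set.insert_subset_iff, Set.singleton_subset_iff]
          refine ⟨?_, ?_⟩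
          · refine mem_map_sup (c⁻¹ • w + (c⁻¹ * d) • z)
              (add_mem (smul_mem _ _ (subset_span (by simp)))
                (smul_mem _ _ (subset_span (by simp))))
              ((-(c⁻¹ * b)) • y) (smul_mem _ _ (mem_span_singleton_self y)) ?_
            simp only [map_add, map_smul, tE_apply]
            rw [hyz, hywd]
            match_scalars <;> field_simp <;> ring
          · refine mem_map_sup (-z) (neg_mem (subset_span (by simp))) 0 (zero_mem _) ?_
            rw [map_neg, tE_apply, hyz]
            simp
        have hzmem : z ∈ span ℝ ({y} : Set L) :=
          flag_aux _ (hNil y) _ _ hstaby hS (subset_span (by simp))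
        exact c3 (span_mono (by simp) hzmem)
      rw [hC, zero_smul, add_zero] at hywd
      have hD : d = 0 := by
        by_contra hD
        have hwmem := flag1 (LieModule.toEnd ℝ L L y) (hNil y) (span ℝ ({y} : Set L))
          hstaby (μ := d) hD (u := w)
          (by
            rw [tE_apply, hywd]
            have h9 : b • y + d • w - d • w = b • y := by abel
            rw [h9]
            exact smul_mem _ _ (mem_span_singleton_self y))
        exact c4 (span_mono (by simp) hwmem)
      rw [hD, zero_smul, add_zero] at hywd
      have hB : b = 0 := by
        by_contra hB
        have hymem := flag1 (LieModule.toEnd ℝ L L w) (hNil w) ⊥ (bot_stable _)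
          (μ := -b) (neg_ne_zero.mpr hB) (u := y)
          (by
            rw [Submodule.mem_bot, tE_apply, show ⁅w, y⁆ = -⁅y, w⁆ from (lie_skew w y).symm,
              hywd, neg_smul, sub_neg_eq_add, neg_add_cancel])
        rw [Submodule.mem_bot] at hymem
        exact hyne hymem
      rw [hB, zero_smul] at hywd
      exact hywd
    have hwy : ⁅w, y⁆ = 0 := by rw [show ⁅w, y⁆ = -⁅y, w⁆ from (lie_skew w y).symm, hyw, neg_zero]
    -- Step F4 : structure of ⁅x0, z⁆
    have hpV : ⁅x0, z⁆ ∈ span ℝ ({x0, y, z, w} : Set L) := by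
      have hforce := force4 c1 c2 c3 c4 (s := {x0, y, z, ⁅x0, y⁆, ⁅x0, z⁆, ⁅y, z⁆})
        (by
          rw [span_le, Set.insert_subset_iff, Set.insert_subset_iff, Set.insert_subset_iff,
            Set.singleton_subset_iff]
          refine ⟨subset_span (by simp), subset_span (by simp), subset_span (by simp), ?_⟩
          rw [show w = -⁅y, z⁆ by rw [hyz, neg_neg]]
          exact neg_mem (subset_span (by simp))) (hdim x0 y z)
      rw [← hforce]
      exact subset_span (by simp)
    obtain ⟨p1, p2, p3, p4, hp⟩ := repr4 hpV
    have hxw : ⁅x0, w⁆ = p1 • z + p3 • w := by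
      have j := lie_lie x0 z y
      rw [hwdef, hzdef, lie_self, sub_zero] at j
      rw [hp] at j
      simp only [add_lie, smul_lie] at j
      rw [hzdef, hwdef, lie_self, hwy] at j
      simp only [smul_zero, add_zero, zero_add] at j
      exact j.symm
    have hzw : ⁅z, w⁆ = p1 • w := by
      have j := lie_lie y x0 w
      rw [hyx, hyw, lie_zero, sub_zero, neg_lie, hxw, lie_add, lie_smul, lie_smul, hyz, hyw,
        smul_zero, add_zero, smul_neg] at j
      have := neg_injective j
      rw [this]
    have hp1 : p1 = 0 := by
      by_contra hp1
      have hwmem := flag1 (LieModule.toEnd ℝ L L z) (hNil z) ⊥ (bot_stable _)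
        (μ := p1) hp1 (u := w)
        (by rw [Submodule.mem_bot, tE_apply, hzw, sub_self])
      rw [Submodule.mem_bot] at hwmem
      exact hw hwmem
    rw [hp1, zero_smul, zero_add] at hxw
    rw [hp1, zero_smul] at hzw
    have hp3 : p3 = 0 := by
      by_contra hp3
      have hwmem := flag1 (LieModule.toEnd ℝ L L x0) (hNil x0) ⊥ (bot_stable _)
        (μ := p3) hp3 (u := w)
        (by rw [Submodule.mem_bot, tE_apply, hxw, sub_self])
      rw [Submodule.mem_bot] at hwmem
      exact hw hwmem
    rw [hp3, zero_smul] at hxw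
    rw [hp1, zero_smul, zero_add, hp3, zero_smul, add_zero] at hp
    -- hp : ⁅x0, z⁆ = p2 • y + p4 • w
    have hp2 : p2 = 0 := by
      by_contra hp2
      have hstabw : ∀ m ∈ span ℝ ({w} : Set L),
          (LieModule.toEnd ℝ L L x0) m ∈ span ℝ ({w} : Set L) := span_stable (by
        rintro u hu
        rw [Set.mem_singleton_iff] at hu
        rw [hu, tE_apply, hxw]
        exact zero_mem _)
      have hS : span ℝ ({y, z} : Set L) ≤
          (span ℝ ({y, z} : Set L)).map (LieModule.toEnd ℝ L L x0) ⊔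
            span ℝ ({w} : Set L) := by
        rw [span_le, Set.insert_subset_iff, Set.singleton_subset_iff]
        refine ⟨?_, ?_⟩
        · refine mem_map_sup (p2⁻¹ • z) (smul_mem _ _ (subset_span (by simp)))
            ((-(p2⁻¹ * p4)) • w) (smul_mem _ _ (mem_span_singleton_self w)) ?_
          simp only [map_smul, tE_apply]
          rw [hp]
          match_scalars <;> field_simp <;> ring
        · refine mem_map_sup y (subset_span (by simp)) 0 (zero_mem _) ?_
          rw [tE_apply, hzdef]
          simp
      have hymem : y ∈ span ℝ ({w} : Set L) :=
        flag_aux _ (hNil x0) _ _ hstabw hS (subset_span (by simp))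
      exact c4 (span_mono (by simp) (mem_span_singleton_swap hyne hymem))
    rw [hp2, zero_smul, zero_add] at hp
    -- hp : ⁅x0, z⁆ = p4 • w ; normalize x := x0 + p4 • y
    obtain ⟨x, hxdef⟩ : ∃ x, x0 + p4 • y = x := ⟨_, rfl⟩
    have hxy : ⁅x, y⁆ = z := by
      rw [← hxdef, add_lie, smul_lie, lie_self, smul_zero, add_zero, hzdef]
    have hxz : ⁅x, z⁆ = 0 := by
      rw [← hxdef, add_lie, smul_lie, hp, hyz, smul_neg]
      abel
    have hxw' : ⁅x, w⁆ = 0 := by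
      rw [← hxdef, add_lie, smul_lie, hxw, hyw, smul_zero, add_zero]
    obtain ⟨d1, d2, d3, d4⟩ := chain_of hxy hwdef hw
    have hyx' : ⁅y, x⁆ = -z := by rw [← hxy]; rw [lie_skew]
    -- Phase B : every element of L lies in V = span {x, y, z, w}
    have hVtop : ∀ v : L, v ∈ span ℝ ({x, y, z, w} : Set L) := by
      intro v
      by_contra hv
      have e2 : z ∉ span ℝ ({y} : Set L) := fun h => d3 (span_mono (by simp) h)
      have e3 : w ∉ span ℝ ({y, z} : Set L) := fun h => d4 (span_mono (by simp) h)
      have e4 : v ∉ span ℝ ({y, z, w} : Set L) := fun h => hv (span_mono (by simp) h)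
      have f4 : v ∉ span ℝ ({x, y, z} : Set L) := by
        intro h
        refine hv (span_mono ?_ h)
        intro t ht
        simp only [Set.mem_insert_iff, Set.mem_singleton_iff] at ht ⊢
        tauto
      have force1 := force4 hyne e2 e3 e4 (s := {v, y, z, ⁅v, y⁆, ⁅v, z⁆, ⁅y, z⁆})
        (by
          rw [span_le, Set.insert_subset_iff, Set.insert_subset_iff, Set.insert_subset_iff,
            Set.singleton_subset_iff]
          refine ⟨subset_span (by simp), subset_span (by simp), ?_, subset_span (by simp)⟩
          rw [show w = -⁅y, z⁆ by rw [hyz, neg_neg]]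
          exact neg_mem (subset_span (by simp))) (hdim v y z)
      have force2 := force4 d1 d2 d3 f4 (s := {v, x, y, ⁅v, x⁆, ⁅v, y⁆, ⁅x, y⁆})
        (by
          rw [span_le, Set.insert_subset_iff, Set.insert_subset_iff, Set.insert_subset_iff,
            Set.singleton_subset_iff]
          refine ⟨subset_span (by simp), subset_span (by simp), ?_, subset_span (by simp)⟩
          rw [← hxy]
          exact subset_span (by simp)) (hdim v x y)
      have hvy1 : ⁅v, y⁆ ∈ span ℝ ({y, z, w, v} : Set L) := by
        rw [← force1]; exact subset_span (by simp)
      have hvy2 : ⁅v, y⁆ ∈ span ℝ ({x, y, z, v} : Set L) := by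
        rw [← force2]; exact subset_span (by simp)
      obtain ⟨q1, q2, q3, q4, hq⟩ := repr4 hvy1
      obtain ⟨r1, r2, r3, r4, hr⟩ := repr4 hvy2
      have hcomb : (-r1) • x + (q1 - r2) • y + (q2 - r3) • z + q3 • w + (q4 - r4) • v = 0 := by
        have hsub : (q1 • y + q2 • z + q3 • w + q4 • v)
            - (r1 • x + r2 • y + r3 • z + r4 • v) = 0 := sub_eq_zero.mpr (hq.symm.trans hr)
        rw [← hsub]; module
      obtain ⟨g1, g2, g3, g4, g5⟩ := chain5_coeff d1 d2 d3 d4 hv hcomb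
      rw [g4, zero_smul, add_zero] at hq
      have hstab3 : ∀ m ∈ span ℝ ({y, z, w} : Set L),
          (LieModule.toEnd ℝ L L y) m ∈ span ℝ ({y, z, w} : Set L) := span_stable (by
        have m1 : (LieModule.toEnd ℝ L L y) y ∈ span ℝ ({y, z, w} : Set L) := by
          rw [tE_apply, lie_self]; exact zero_mem _
        have m2 : (LieModule.toEnd ℝ L L y) z ∈ span ℝ ({y, z, w} : Set L) := by
          rw [tE_apply, hyz]; exact neg_mem (subset_span (by simp))
        have m3 : (LieModule.toEnd ℝ L L y) w ∈ span ℝ ({y, z, w} : Set L) := by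
          rw [tE_apply, hyw]; exact zero_mem _
        intro s hs
        simp only [Set.mem_insert_iff, Set.mem_singleton_iff] at hs
        rcases hs with h | h | h <;> rw [h] <;> assumption)
      have hq4 : q4 = 0 := by
        by_contra hq4
        have hvmem := flag1 (LieModule.toEnd ℝ L L y) (hNil y) (span ℝ ({y, z, w} : Set L))
          hstab3 (μ := -q4) (neg_ne_zero.mpr hq4) (u := v)
          (by
            rw [tE_apply, show ⁅y, v⁆ = -⁅v, y⁆ from (lie_skew y v).symm, hq]
            have h9 : -(q1 • y + q2 • z + q4 • v) - (-q4) • v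
                = (-q1) • y + (-q2) • z + (0 : ℝ) • w := by
              match_scalars <;> ring
            rw [h9]
            exact combo3_mem y z w _ _ _)
        exact hv (span_mono (by simp) hvmem)
      rw [hq4, zero_smul, add_zero] at hq
      obtain ⟨u, hudef⟩ : ∃ u, v - q2 • x = u := ⟨_, rfl⟩
      have huy : ⁅u, y⁆ = q1 • y := by
        rw [← hudef, sub_lie, smul_lie, hxy, hq]
        abel
      have hq1 : q1 = 0 := by
        by_contra hq1
        have hymem := flag1 (LieModule.toEnd ℝ L L u) (hNil u) ⊥ (bot_stable _)
          (μ := q1) hq1 (u := y) (by rw [Submodule.mem_bot, tE_apply, huy, sub_self])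
        rw [Submodule.mem_bot] at hymem
        exact hyne hymem
      rw [hq1, zero_smul] at huy
      have hunotV : u ∉ span ℝ ({x, y, z, w} : Set L) := by
        intro h
        apply hv
        have hveq : v = u + q2 • x := by rw [← hudef]; abel
        rw [hveq]
        exact add_mem h (smul_mem _ _ (subset_span (by simp)))
      -- final contradiction with the triple (u + z, x, y)
      have hzm : z ∈ span ℝ ({u + z, x, y, ⁅u + z, x⁆, ⁅u + z, y⁆, ⁅x, y⁆} : Set L) := by
        rw [← hxy]
        exact subset_span (by simp only [Set.mem_insert_iff, Set.mem_singleton_iff]; tauto)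
      have hwm : w ∈ span ℝ ({u + z, x, y, ⁅u + z, x⁆, ⁅u + z, y⁆, ⁅x, y⁆} : Set L) := by
        rw [show w = ⁅u + z, y⁆ by rw [add_lie, huy, hwdef, zero_add]]
        exact subset_span (by simp)
      have hum : u ∈ span ℝ ({u + z, x, y, ⁅u + z, x⁆, ⁅u + z, y⁆, ⁅x, y⁆} : Set L) := by
        have h6 := sub_mem (subset_span (show u + z ∈
          ({u + z, x, y, ⁅u + z, x⁆, ⁅u + z, y⁆, ⁅x, y⁆} : Set L) by simp)) hzm
        simpa using h6
      refine absurd5 d1 d2 d3 d4 hunotV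
        (s := {u + z, x, y, ⁅u + z, x⁆, ⁅u + z, y⁆, ⁅x, y⁆}) ?_ (hdim (u + z) x y)
      rw [span_le, Set.insert_subset_iff, Set.insert_subset_iff, Set.insert_subset_iff,
        Set.insert_subset_iff, Set.singleton_subset_iff]
      exact ⟨subset_span (by simp), subset_span (by simp), hzm, hwm, hum⟩
    -- Phase C : construct the abelian codimension-one ideal span {x, z, w}
    have hzx : ⁅z, x⁆ = 0 := by
      rw [show ⁅z, x⁆ = -⁅x, z⁆ from (lie_skew z x).symm, hxz, neg_zero]
    have hwx : ⁅w, x⁆ = 0 := by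
      rw [show ⁅w, x⁆ = -⁅x, w⁆ from (lie_skew w x).symm, hxw', neg_zero]
    have hwz : ⁅w, z⁆ = 0 := by
      rw [show ⁅w, z⁆ = -⁅z, w⁆ from (lie_skew w z).symm, hzw, neg_zero]
    have hgen : ∀ g ∈ ({x, y, z, w} : Set L), ∀ m ∈ ({x, z, w} : Set L),
        ⁅g, m⁆ ∈ span ℝ ({x, z, w} : Set L) := by
      intro g hg m hm
      simp only [Set.mem_insert_iff, Set.mem_singleton_iff] at hg hm
      rcases hg with h | h | h | h <;> rcases hm with h' | h' | h' <;> rw [h, h']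
      · rw [lie_self]; exact zero_mem _
      · rw [hxz]; exact zero_mem _
      · rw [hxw']; exact zero_mem _
      · rw [hyx']; exact neg_mem (subset_span (by simp))
      · rw [hyz]; exact neg_mem (subset_span (by simp))
      · rw [hyw]; exact zero_mem _
      · rw [hzx]; exact zero_mem _
      · rw [lie_self]; exact zero_mem _
      · rw [hzw]; exact zero_mem _
      · rw [hwx]; exact zero_mem _
      · rw [hwz]; exact zero_mem _
      · rw [lie_self]; exact zero_mem _
    have hlie : ∀ (g m : L), m ∈ span ℝ ({x, z, w} : Set L) →
        ⁅g, m⁆ ∈ span ℝ ({x, z, w} : Set L) := by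
      intro g m hm
      have hgV : g ∈ span ℝ ({x, y, z, w} : Set L) := hVtop g
      induction hgV using span_induction with
      | mem s hs =>
        induction hm using span_induction with
        | mem m' hm' => exact hgen s hs m' hm'
        | zero => rw [lie_zero]; exact zero_mem _
        | add m1 m2 hm1 hm2 ih1 ih2 => rw [lie_add]; exact add_mem ih1 ih2
        | smul r m' hm' ih => rw [lie_smul]; exact smul_mem _ _ ih
      | zero => rw [zero_lie]; exact zero_mem _
      | add g1 g2 hg1 hg2 ih1 ih2 => rw [add_lie]; exact add_mem ih1 ih2
      | smul r g' hg' ih => rw [smul_lie]; exact smul_mem _ _ ih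
    have habel : ∀ a ∈ span ℝ ({x, z, w} : Set L), ∀ b ∈ span ℝ ({x, z, w} : Set L),
        ⁅a, b⁆ = (0 : L) := by
      intro a ha
      induction ha using span_induction with
      | mem s hs =>
        intro b hb
        induction hb using span_induction with
        | mem m' hm' =>
          simp only [Set.mem_insert_iff, Set.mem_singleton_iff] at hs hm'
          rcases hs with h | h | h <;> rcases hm' with h' | h' | h' <;> rw [h, h']
          · exact lie_self x
          · exact hxz
          · exact hxw'
          · exact hzx
          · exact lie_self z
          · exact hzw
          · exact hwx
          · exact hwz
          · exact lie_self w
        | zero => rw [lie_zero]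
        | add b1 b2 hb1 hb2 ih1 ih2 => rw [lie_add, ih1, ih2, add_zero]
        | smul r b' hb' ih => rw [lie_smul, ih, smul_zero]
      | zero => intro b hb; rw [zero_lie]
      | add a1 a2 ha1 ha2 ih1 ih2 => intro b hb; rw [add_lie, ih1 b hb, ih2 b hb, add_zero]
      | smul r a' ha' ih => intro b hb; rw [smul_lie, ih b hb, smul_zero]
    refine ⟨⟨span ℝ ({x, z, w} : Set L), ?_⟩, ?_, ?_⟩
    · intro g m hm
      exact hlie g m hm
    · intro a ha b hb
      exact habel a ha b hb
    · have e2 : z ∉ span ℝ ({x} : Set L) := by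
        intro h
        refine d3 (span_mono ?_ h)
        intro t ht
        simp only [Set.mem_insert_iff, Set.mem_singleton_iff] at ht ⊢
        tauto
      have e3 : w ∉ span ℝ ({x, z} : Set L) := by
        intro h
        refine d4 (span_mono ?_ h)
        intro t ht
        simp only [Set.mem_insert_iff, Set.mem_singleton_iff] at ht ⊢
        tauto
      have hr3 : finrank ℝ (span ℝ ({x, z, w} : Set L)) = 3 := frank3 d1 e2 e3
      have htop : span ℝ ({x, y, z, w} : Set L) = (⊤ : Submodule ℝ L) :=
        Submodule.eq_top_iff'.mpr hVtop
      have hrL : finrank ℝ L = 4 := by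
        rw [← finrank_top ℝ L, ← htop, frank4 d1 d2 d3 d4]
      rw [hrL]
      have : Module.finrank ℝ (span ℝ ({x, z, w} : Set L)) + 1 = 4 := by rw [hr3]
      exact this
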